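/- Let W̃ be an extended affine Weyl group with automorphism δ, and let 𝒪 be a straight δ-twisted conjugacy class (one containing a δ-straight element). Then the set of minimal length elements of 𝒪 equals the set of δ-straight elements of 𝒪. -/

import Mathlib

open scoped Classical

variable (X : Type*) [AddCommGroup X] (W₀ : Type*) [Group W₀] [DistribMulAction W₀ X]

/-- Multiplication in the extended affine Weyl group `W̃ = X ⋊ W₀`, whose elements are
pairs `(λ, u)` representing `t^λ u`. -/
def eawMul (a b : X × W₀) : X × W₀ := (a.1 + a.2 • b.1, a.2 * b.2)

/-- Inversion in `W̃ = X ⋊ W₀`. -/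
def eawInv (a : X × W₀) : X × W₀ := (-(a.2⁻¹ • a.1), a.2⁻¹)

/-- The finite root `w⁻¹(α)`, i.e. `α` composed with the action of `u`. -/
def rootComp (u : W₀) (α : X →+ ℤ) : X →+ ℤ :=
  α.comp (DistribMulAction.toAddMonoidHom X u)

/-- The Iwahori–Matsumoto length of `t^λ u ∈ W̃`. -/
noncomputable def lenIM (Rplus : Finset (X →+ ℤ)) (w : X × W₀) : ℤ :=
  ∑ α ∈ Rplus, if rootComp X W₀ w.2 α ∈ Rplus then |α w.1| else |α w.1 - 1|

/-- The twisted power `(wδ)^n = w δ(w) ⋯ δ^{n-1}(w)` (as an element of `W̃`). -/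
def twistedPow (δ : X × W₀ → X × W₀) (w : X × W₀) : ℕ → X × W₀
  | 0 => (0, 1)
  | n + 1 => eawMul X W₀ w (δ (twistedPow δ w n))

/-- `w` is `δ`-straight: `ℓ(w δ(w) ⋯ δ^{n-1}(w)) = n ℓ(w)` for all `n`. -/
def IsStraight (Rplus : Finset (X →+ ℤ)) (δ : X × W₀ → X × W₀) (w : X × W₀) : Prop :=
  ∀ n : ℕ, lenIM X W₀ Rplus (twistedPow X W₀ δ w n) = n * lenIM X W₀ Rplus w

section Aux
variable {X W₀}

lemma eaw_one_mul (a : X × W₀) : eawMul X W₀ (0, 1) a = a := by simp [eawMul]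

lemma eaw_mul_one (a : X × W₀) : eawMul X W₀ a (0, 1) = a := by simp [eawMul]

lemma eaw_assoc (a b c : X × W₀) :
    eawMul X W₀ (eawMul X W₀ a b) c = eawMul X W₀ a (eawMul X W₀ b c) := by
  simp [eawMul, mul_smul, smul_add, add_assoc, mul_assoc]

lemma eaw_inv_mul (a : X × W₀) : eawMul X W₀ (eawInv X W₀ a) a = (0, 1) := by
  simp [eawMul, eawInv]

lemma eaw_mul_inv (a : X × W₀) : eawMul X W₀ a (eawInv X W₀ a) = (0, 1) := by
  simp [eawMul, eawInv, smul_neg, smul_smul]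

lemma eaw_mul_inv_cancel_left (a b : X × W₀) :
    eawMul X W₀ a (eawMul X W₀ (eawInv X W₀ a) b) = b := by
  rw [← eaw_assoc, eaw_mul_inv, eaw_one_mul]

lemma eaw_inv_mul_cancel_left (a b : X × W₀) :
    eawMul X W₀ (eawInv X W₀ a) (eawMul X W₀ a b) = b := by
  rw [← eaw_assoc, eaw_inv_mul, eaw_one_mul]

lemma eaw_inv_inv (a : X × W₀) : eawInv X W₀ (eawInv X W₀ a) = a := by
  simp [eawInv, smul_neg, smul_smul]

lemma eaw_inv_mul_rev (a b : X × W₀) :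
    eawInv X W₀ (eawMul X W₀ a b) = eawMul X W₀ (eawInv X W₀ b) (eawInv X W₀ a) := by
  simp [eawInv, eawMul, mul_inv_rev, mul_smul, smul_add, smul_neg, neg_add, add_comm]

end Aux

section Len
variable {X W₀}

lemma rootComp_mul' (u v : W₀) (α : X →+ ℤ) :
    rootComp X W₀ (u * v) α = rootComp X W₀ v (rootComp X W₀ u α) := by
  ext x; simp [rootComp, mul_smul]

lemma rootComp_one' (α : X →+ ℤ) : rootComp X W₀ (1 : W₀) α = α := by
  ext x; simp [rootComp]

lemma rootComp_neg' (u : W₀) (α : X →+ ℤ) :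
    rootComp X W₀ u (-α) = -(rootComp X W₀ u α) := by
  ext x; simp [rootComp]

lemma rootComp_injective (u : W₀) : Function.Injective (rootComp X W₀ u) := by
  intro α β h
  have h2 := congrArg (rootComp X W₀ u⁻¹) h
  rwa [← rootComp_mul', ← rootComp_mul', mul_inv_cancel, rootComp_one', rootComp_one'] at h2

noncomputable def eawPosPart (Rplus : Finset (X →+ ℤ)) (u : W₀) (α : X →+ ℤ) : X →+ ℤ :=
  if rootComp X W₀ u α ∈ Rplus then rootComp X W₀ u α else -(rootComp X W₀ u α)

variable {Rplus : Finset (X →+ ℤ)}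
variable (hdisj : ∀ α ∈ Rplus, -α ∉ Rplus)
variable (hstab : ∀ u : W₀, ∀ α ∈ Rplus,
    rootComp X W₀ u α ∈ Rplus ∨ -(rootComp X W₀ u α) ∈ Rplus)

include hdisj hstab in
lemma eawPosPart_mem (u : W₀) {α : X →+ ℤ} (hα : α ∈ Rplus) : eawPosPart Rplus u α ∈ Rplus := by
  unfold eawPosPart
  rcases hstab u α hα with h | h
  · rwa [if_pos h]
  · rw [if_neg (fun hc => hdisj _ hc h)]
    exact h

include hdisj in
lemma eawPosPart_injOn (u : W₀) : ∀ α ∈ Rplus, ∀ β ∈ Rplus,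
    eawPosPart Rplus u α = eawPosPart Rplus u β → α = β := by
  intro α hα β hβ h
  unfold eawPosPart at h
  by_cases h1 : rootComp X W₀ u α ∈ Rplus <;> by_cases h2 : rootComp X W₀ u β ∈ Rplus
  · rw [if_pos h1, if_pos h2] at h; exact rootComp_injective u h
  · rw [if_pos h1, if_neg h2, ← rootComp_neg'] at h
    have : α = -β := rootComp_injective u h
    rw [this] at hα; exact absurd hα (hdisj β hβ)
  · rw [if_neg h1, if_pos h2, ← rootComp_neg'] at h
    have : -α = β := rootComp_injective u h
    rw [← this] at hβ; exact absurd hβ (hdisj α hα)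
  · rw [if_neg h1, if_neg h2] at h
    exact rootComp_injective u (neg_injective h)

lemma lenIM_nonneg (a : X × W₀) : 0 ≤ lenIM X W₀ Rplus a :=
  Finset.sum_nonneg fun α _ => by split <;> exact abs_nonneg _

lemma lenIM_one : lenIM X W₀ Rplus ((0, 1) : X × W₀) = 0 :=
  Finset.sum_eq_zero fun α hα => by
    rw [show ((0, 1) : X × W₀).2 = 1 from rfl, rootComp_one', if_pos hα]
    simp

include hdisj hstab in
lemma sum_eawPosPart_le (u : W₀) (f : (X →+ ℤ) → ℤ) (hf : ∀ β, 0 ≤ f β) :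
    ∑ α ∈ Rplus, f (eawPosPart Rplus u α) ≤ ∑ β ∈ Rplus, f β := by
  rw [← Finset.sum_image (eawPosPart_injOn hdisj u)]
  refine Finset.sum_le_sum_of_subset_of_nonneg ?_ fun β _ _ => hf β
  intro β hβ
  obtain ⟨α, hα, rfl⟩ := Finset.mem_image.mp hβ
  exact eawPosPart_mem hdisj hstab u hα

include hdisj hstab in
lemma term_mul_le (u v : W₀) {α : X →+ ℤ} (hα : α ∈ Rplus) (lam mu : X) :
    (if rootComp X W₀ (u * v) α ∈ Rplus then |α lam + rootComp X W₀ u α mu|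
      else |α lam + rootComp X W₀ u α mu - 1|)
    ≤ (if rootComp X W₀ u α ∈ Rplus then |α lam| else |α lam - 1|)
      + (if rootComp X W₀ v (eawPosPart Rplus u α) ∈ Rplus then |eawPosPart Rplus u α mu|
          else |eawPosPart Rplus u α mu - 1|) := by
  set A := α lam with hA
  set B := rootComp X W₀ u α mu with hB
  rw [rootComp_mul']
  by_cases h1 : rootComp X W₀ u α ∈ Rplus
  · rw [if_pos h1, eawPosPart, if_pos h1, ← hB]
    by_cases h2 : rootComp X W₀ v (rootComp X W₀ u α) ∈ Rplus
    · rw [if_pos h2, if_pos h2]; exact abs_add_le A B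
    · rw [if_neg h2, if_neg h2, show A + B - 1 = A + (B - 1) by ring]
      exact abs_add_le A (B - 1)
  · have hmem : -(rootComp X W₀ u α) ∈ Rplus := (hstab u α hα).resolve_left h1
    rw [if_neg h1, eawPosPart, if_neg h1]
    have hval : (-(rootComp X W₀ u α)) mu = -B := rfl
    by_cases h2 : rootComp X W₀ v (-(rootComp X W₀ u α)) ∈ Rplus
    · have h3 : rootComp X W₀ v (rootComp X W₀ u α) ∉ Rplus := by
        intro hc
        refine hdisj _ hc ?_
        rwa [← rootComp_neg']
      rw [if_neg h3, if_pos h2, hval, abs_neg, show A + B - 1 = (A - 1) + B by ring]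
      exact abs_add_le (A - 1) B
    · have h3 : rootComp X W₀ v (rootComp X W₀ u α) ∈ Rplus := by
        rcases hstab v _ hmem with h | h
        · exact absurd h h2
        · rwa [rootComp_neg', neg_neg] at h
      rw [if_pos h3, if_neg h2, hval, show -B - 1 = -(B + 1) by ring, abs_neg,
        show A + B = (A - 1) + (B + 1) by ring]
      exact abs_add_le (A - 1) (B + 1)

include hdisj hstab in
lemma lenIM_mul_le (a b : X × W₀) :
    lenIM X W₀ Rplus (eawMul X W₀ a b) ≤ lenIM X W₀ Rplus a + lenIM X W₀ Rplus b := by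
  obtain ⟨lam, u⟩ := a
  obtain ⟨mu, v⟩ := b
  have e3 : ∀ (α : X →+ ℤ) (x : X), α (u • x) = rootComp X W₀ u α x := fun _ _ => rfl
  have key : lenIM X W₀ Rplus (eawMul X W₀ (lam, u) (mu, v)) ≤
      ∑ α ∈ Rplus, ((if rootComp X W₀ u α ∈ Rplus then |α lam| else |α lam - 1|)
        + (if rootComp X W₀ v (eawPosPart Rplus u α) ∈ Rplus then |eawPosPart Rplus u α mu|
            else |eawPosPart Rplus u α mu - 1|)) := by
    unfold lenIM
    simp only [show (eawMul X W₀ (lam, u) (mu, v)).1 = lam + u • mu from rfl,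
      show (eawMul X W₀ (lam, u) (mu, v)).2 = u * v from rfl, map_add, e3]
    exact Finset.sum_le_sum fun α hα => term_mul_le hdisj hstab u v hα lam mu
  rw [Finset.sum_add_distrib] at key
  refine key.trans (add_le_add (le_of_eq rfl) ?_)
  exact sum_eawPosPart_le hdisj hstab u
    (fun β => if rootComp X W₀ v β ∈ Rplus then |β mu| else |β mu - 1|)
    (fun β => by split <;> exact abs_nonneg _)

include hdisj hstab in
lemma lenIM_inv_le (a : X × W₀) : lenIM X W₀ Rplus (eawInv X W₀ a) ≤ lenIM X W₀ Rplus a := by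
  obtain ⟨lam, u⟩ := a
  have step : lenIM X W₀ Rplus (eawInv X W₀ (lam, u)) =
      ∑ α ∈ Rplus, (fun β => if rootComp X W₀ u β ∈ Rplus then |β lam| else |β lam - 1|)
        (eawPosPart Rplus u⁻¹ α) := by
    refine Finset.sum_congr rfl fun α hα => ?_
    have e1 : α ((eawInv X W₀ (lam, u)).1) = -((rootComp X W₀ u⁻¹ α) lam) := by
      simp [eawInv, rootComp]
    have e2 : (eawInv X W₀ (lam, u)).2 = u⁻¹ := rfl
    have hru : rootComp X W₀ u (rootComp X W₀ u⁻¹ α) = α := by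
      rw [← rootComp_mul', inv_mul_cancel, rootComp_one']
    dsimp only
    rw [e1, e2]
    by_cases h1 : rootComp X W₀ u⁻¹ α ∈ Rplus
    · simp only [eawPosPart, if_pos h1, hru, if_pos hα, abs_neg]
    · have hmem : -(rootComp X W₀ u⁻¹ α) ∈ Rplus := (hstab u⁻¹ α hα).resolve_left h1
      have h3 : rootComp X W₀ u (-(rootComp X W₀ u⁻¹ α)) ∉ Rplus := by
        rw [rootComp_neg', hru]
        exact hdisj α hα
      simp only [eawPosPart, if_neg h1, if_neg h3, AddMonoidHom.neg_apply]
  rw [step]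
  exact sum_eawPosPart_le hdisj hstab u⁻¹ _ (fun β => by dsimp only; split <;> exact abs_nonneg _)

include hdisj hstab in
lemma lenIM_inv (a : X × W₀) : lenIM X W₀ Rplus (eawInv X W₀ a) = lenIM X W₀ Rplus a := by
  refine le_antisymm (lenIM_inv_le hdisj hstab a) ?_
  have := lenIM_inv_le hdisj hstab (eawInv X W₀ a)
  rwa [eaw_inv_inv] at this

end Len

section Delta
variable {X W₀} {δ : X × W₀ → X × W₀}
variable (hδmul : ∀ a b, δ (eawMul X W₀ a b) = eawMul X W₀ (δ a) (δ b))
include hδmul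

lemma delta_one : δ (0, 1) = (0, 1) := by
  have h : δ ((0, 1) : X × W₀) = eawMul X W₀ (δ (0, 1)) (δ (0, 1)) := by
    rw [← hδmul, eaw_one_mul]
  have h1 : eawMul X W₀ (eawInv X W₀ (δ ((0, 1) : X × W₀))) (δ ((0, 1) : X × W₀)) = (0, 1) :=
    eaw_inv_mul _
  nth_rewrite 2 [h] at h1
  rw [eaw_inv_mul_cancel_left] at h1
  rw [h1]

lemma delta_inv (a : X × W₀) : δ (eawInv X W₀ a) = eawInv X W₀ (δ a) := by
  have h : eawMul X W₀ (δ a) (δ (eawInv X W₀ a)) = (0, 1) := by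
    rw [← hδmul, eaw_mul_inv, delta_one hδmul]
  have h2 := congrArg (eawMul X W₀ (eawInv X W₀ (δ a))) h
  rwa [eaw_inv_mul_cancel_left, eaw_mul_one] at h2

lemma iter_mul (n : ℕ) (a b : X × W₀) :
    δ^[n] (eawMul X W₀ a b) = eawMul X W₀ (δ^[n] a) (δ^[n] b) := by
  induction n with
  | zero => simp
  | succ n ih => simp [Function.iterate_succ_apply', ih, hδmul]

lemma iter_inv (n : ℕ) (a : X × W₀) :
    δ^[n] (eawInv X W₀ a) = eawInv X W₀ (δ^[n] a) := by
  induction n with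
  | zero => simp
  | succ n ih => simp [Function.iterate_succ_apply', ih, delta_inv hδmul]

lemma twistedPow_one' (w : X × W₀) : twistedPow X W₀ δ w 1 = w := by
  simp [twistedPow, delta_one hδmul, eaw_mul_one]

lemma twistedPow_add (w : X × W₀) (m n : ℕ) :
    twistedPow X W₀ δ w (m + n) =
      eawMul X W₀ (twistedPow X W₀ δ w m) (δ^[m] (twistedPow X W₀ δ w n)) := by
  induction m with
  | zero => simp [twistedPow, eaw_one_mul]
  | succ m ih =>
      rw [show m + 1 + n = (m + n) + 1 by omega, twistedPow, ih, hδmul,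
        ← Function.iterate_succ_apply' δ m, ← eaw_assoc]
      rfl

lemma conj_twistedPow (z w : X × W₀) (n : ℕ) :
    twistedPow X W₀ δ (eawMul X W₀ (eawMul X W₀ z w) (eawInv X W₀ (δ z))) n
      = eawMul X W₀ (eawMul X W₀ z (twistedPow X W₀ δ w n)) (eawInv X W₀ (δ^[n] z)) := by
  induction n with
  | zero => simp [twistedPow, eaw_mul_one, eaw_mul_inv]
  | succ n ih =>
      rw [twistedPow, ih, hδmul, hδmul, delta_inv hδmul, ← Function.iterate_succ_apply' δ n,
        show (twistedPow X W₀ δ w (n+1)) = eawMul X W₀ w (δ (twistedPow X W₀ δ w n)) from rfl]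
      simp only [eaw_assoc, eaw_inv_mul_cancel_left, eaw_mul_inv_cancel_left]

lemma conj_trans (x y w₀ : X × W₀) :
    eawMul X W₀ (eawMul X W₀ x w₀) (eawInv X W₀ (δ x)) =
      eawMul X W₀
        (eawMul X W₀ (eawMul X W₀ x (eawInv X W₀ y))
          (eawMul X W₀ (eawMul X W₀ y w₀) (eawInv X W₀ (δ y))))
        (eawInv X W₀ (δ (eawMul X W₀ x (eawInv X W₀ y)))) := by
  rw [hδmul, delta_inv hδmul, eaw_inv_mul_rev, eaw_inv_inv]
  simp only [eaw_assoc, eaw_inv_mul_cancel_left, eaw_mul_inv_cancel_left]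

end Delta

section Main
variable {X W₀} {Rplus : Finset (X →+ ℤ)} {δ : X × W₀ → X × W₀}
variable (hdisj : ∀ α ∈ Rplus, -α ∉ Rplus)
variable (hstab : ∀ u : W₀, ∀ α ∈ Rplus,
    rootComp X W₀ u α ∈ Rplus ∨ -(rootComp X W₀ u α) ∈ Rplus)
variable (hδmul : ∀ a b, δ (eawMul X W₀ a b) = eawMul X W₀ (δ a) (δ b))
variable (hδlen : ∀ a, lenIM X W₀ Rplus (δ a) = lenIM X W₀ Rplus a)

include hδlen in
lemma iter_len (n : ℕ) (a : X × W₀) : lenIM X W₀ Rplus (δ^[n] a) = lenIM X W₀ Rplus a := by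
  induction n with
  | zero => simp
  | succ n ih => rw [Function.iterate_succ_apply', hδlen, ih]

include hdisj hstab hδmul hδlen in
lemma lenT_add_le (w : X × W₀) (m n : ℕ) :
    lenIM X W₀ Rplus (twistedPow X W₀ δ w (m + n)) ≤
      lenIM X W₀ Rplus (twistedPow X W₀ δ w m) + lenIM X W₀ Rplus (twistedPow X W₀ δ w n) := by
  rw [twistedPow_add hδmul]
  exact (lenIM_mul_le hdisj hstab _ _).trans (by rw [iter_len hδlen])

include hdisj hstab hδmul hδlen in
lemma lenT_le (w : X × W₀) (n : ℕ) :
    lenIM X W₀ Rplus (twistedPow X W₀ δ w n) ≤ (n : ℤ) * lenIM X W₀ Rplus w := by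
  induction n with
  | zero => simp [twistedPow, lenIM_one]
  | succ n ih =>
      calc lenIM X W₀ Rplus (twistedPow X W₀ δ w (n + 1))
          ≤ lenIM X W₀ Rplus (twistedPow X W₀ δ w n) +
              lenIM X W₀ Rplus (twistedPow X W₀ δ w 1) :=
            lenT_add_le hdisj hstab hδmul hδlen w n 1
        _ ≤ (n : ℤ) * lenIM X W₀ Rplus w + lenIM X W₀ Rplus w := by
            rw [twistedPow_one' hδmul]; exact add_le_add ih le_rfl
        _ = ((n + 1 : ℕ) : ℤ) * lenIM X W₀ Rplus w := by push_cast; ring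

include hdisj hstab hδmul hδlen in
lemma lenT_kmul_le (w : X × W₀) (n k : ℕ) :
    lenIM X W₀ Rplus (twistedPow X W₀ δ w (k * n)) ≤
      (k : ℤ) * lenIM X W₀ Rplus (twistedPow X W₀ δ w n) := by
  induction k with
  | zero => simp [twistedPow, lenIM_one]
  | succ k ih =>
      rw [show (k + 1) * n = k * n + n by ring]
      calc lenIM X W₀ Rplus (twistedPow X W₀ δ w (k * n + n))
          ≤ lenIM X W₀ Rplus (twistedPow X W₀ δ w (k * n)) +
              lenIM X W₀ Rplus (twistedPow X W₀ δ w n) :=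
            lenT_add_le hdisj hstab hδmul hδlen w (k * n) n
        _ ≤ (k : ℤ) * lenIM X W₀ Rplus (twistedPow X W₀ δ w n) +
              lenIM X W₀ Rplus (twistedPow X W₀ δ w n) := add_le_add ih le_rfl
        _ = ((k + 1 : ℕ) : ℤ) * lenIM X W₀ Rplus (twistedPow X W₀ δ w n) := by push_cast; ring

end Main

/-- Let `𝒪` be a straight `δ`-twisted conjugacy class of the extended affine
Weyl group `W̃ = X ⋊ W₀` (an orbit of `x · w = x w δ(x)⁻¹` containing a `δ`-straight
element). Then the set of minimal length elements of `𝒪` equals the set of `δ`-straight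
elements of `𝒪`. -/
theorem straight_class_min_eq_straight
    (Rplus : Finset (X →+ ℤ))
    (hdisj : ∀ α ∈ Rplus, -α ∉ Rplus)
    (hstab : ∀ u : W₀, ∀ α ∈ Rplus,
      rootComp X W₀ u α ∈ Rplus ∨ -(rootComp X W₀ u α) ∈ Rplus)
    (δ : X × W₀ → X × W₀)
    (hδmul : ∀ a b, δ (eawMul X W₀ a b) = eawMul X W₀ (δ a) (δ b))
    (hδlen : ∀ a, lenIM X W₀ Rplus (δ a) = lenIM X W₀ Rplus a)
    (𝒪 : Set (X × W₀)) (w₀ : X × W₀)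
    (h𝒪 : 𝒪 = {w | ∃ x : X × W₀, w = eawMul X W₀ (eawMul X W₀ x w₀) (eawInv X W₀ (δ x))})
    (hstraight : ∃ w ∈ 𝒪, IsStraight X W₀ Rplus δ w) :
    {w ∈ 𝒪 | ∀ v ∈ 𝒪, lenIM X W₀ Rplus w ≤ lenIM X W₀ Rplus v} =
      {w ∈ 𝒪 | IsStraight X W₀ Rplus δ w} := by
  -- any two elements of 𝒪 are twisted-conjugate
  have rel : ∀ w' ∈ 𝒪, ∀ v ∈ 𝒪, ∃ z : X × W₀,
      v = eawMul X W₀ (eawMul X W₀ z w') (eawInv X W₀ (δ z)) := by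
    intro w' hw' v hv
    rw [h𝒪] at hw' hv
    obtain ⟨y, hy⟩ := hw'
    obtain ⟨x, hx⟩ := hv
    refine ⟨eawMul X W₀ x (eawInv X W₀ y), ?_⟩
    rw [hx, hy]
    exact conj_trans hδmul x y w₀
  -- uniform comparison of lengths of twisted powers
  have bound : ∀ w' ∈ 𝒪, ∀ v ∈ 𝒪, ∃ C : ℤ, 0 ≤ C ∧ ∀ n : ℕ,
      lenIM X W₀ Rplus (twistedPow X W₀ δ w' n) ≤
        lenIM X W₀ Rplus (twistedPow X W₀ δ v n) + C := by
    intro w' hw' v hv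
    obtain ⟨z, hz⟩ := rel w' hw' v hv
    refine ⟨2 * lenIM X W₀ Rplus z,
      by have := lenIM_nonneg (Rplus := Rplus) z; linarith, fun n => ?_⟩
    have hvn : twistedPow X W₀ δ v n =
        eawMul X W₀ (eawMul X W₀ z (twistedPow X W₀ δ w' n)) (eawInv X W₀ (δ^[n] z)) := by
      rw [hz]; exact conj_twistedPow hδmul z w' n
    have hwn : twistedPow X W₀ δ w' n =
        eawMul X W₀ (eawInv X W₀ z) (eawMul X W₀ (twistedPow X W₀ δ v n) (δ^[n] z)) := by
      rw [hvn]
      simp only [eaw_assoc, eaw_inv_mul, eaw_mul_one, eaw_inv_mul_cancel_left]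
    have h1 : lenIM X W₀ Rplus (twistedPow X W₀ δ w' n) ≤
        lenIM X W₀ Rplus (eawInv X W₀ z) +
          (lenIM X W₀ Rplus (twistedPow X W₀ δ v n) + lenIM X W₀ Rplus (δ^[n] z)) := by
      rw [hwn]
      exact (lenIM_mul_le hdisj hstab _ _).trans
        (add_le_add le_rfl (lenIM_mul_le hdisj hstab _ _))
    rw [lenIM_inv hdisj hstab, iter_len hδlen] at h1
    linarith
  -- straight elements have minimal length
  have lower : ∀ w' ∈ 𝒪, IsStraight X W₀ Rplus δ w' → ∀ v ∈ 𝒪,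
      lenIM X W₀ Rplus w' ≤ lenIM X W₀ Rplus v := by
    intro w' hw' hstr v hv
    obtain ⟨C, hC, hb⟩ := bound w' hw' v hv
    by_contra hcon
    push_neg at hcon
    have hlt : lenIM X W₀ Rplus v ≤ lenIM X W₀ Rplus w' - 1 := by omega
    set n : ℕ := (C + 1).toNat with hn
    have hncast : (n : ℤ) = C + 1 := Int.toNat_of_nonneg (by linarith)
    have h1 : (n : ℤ) * lenIM X W₀ Rplus w' ≤ (n : ℤ) * lenIM X W₀ Rplus v + C := by
      have hb' := hb n
      rw [hstr n] at hb'
      have h2 := lenT_le hdisj hstab hδmul hδlen v n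
      linarith
    have h3 : (n : ℤ) * lenIM X W₀ Rplus v ≤ (n : ℤ) * (lenIM X W₀ Rplus w' - 1) :=
      mul_le_mul_of_nonneg_left hlt (by rw [hncast]; linarith)
    have hexp : (n : ℤ) * (lenIM X W₀ Rplus w' - 1) =
        (n : ℤ) * lenIM X W₀ Rplus w' - (n : ℤ) := by ring
    rw [hexp] at h3
    rw [hncast] at h1 h3
    linarith
  obtain ⟨w, hw, hwstr⟩ := hstraight
  ext v
  simp only [Set.mem_setOf_eq]
  constructor
  · rintro ⟨hv, hmin⟩
    refine ⟨hv, ?_⟩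
    have hvw : lenIM X W₀ Rplus v = lenIM X W₀ Rplus w :=
      le_antisymm (hmin w hw) (lower w hw hwstr v hv)
    intro n
    refine le_antisymm (lenT_le hdisj hstab hδmul hδlen v n) ?_
    by_contra hcon
    push_neg at hcon
    have hlt : lenIM X W₀ Rplus (twistedPow X W₀ δ v n) ≤ (n : ℤ) * lenIM X W₀ Rplus v - 1 := by
      have := Int.lt_iff_add_one_le.mp hcon
      linarith
    obtain ⟨C, hC, hb⟩ := bound w hw v hv
    set k : ℕ := (C + 1).toNat with hk
    have hkcast : (k : ℤ) = C + 1 := Int.toNat_of_nonneg (by linarith)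
    have h1 : lenIM X W₀ Rplus (twistedPow X W₀ δ v (k * n)) ≤
        (k : ℤ) * lenIM X W₀ Rplus (twistedPow X W₀ δ v n) :=
      lenT_kmul_le hdisj hstab hδmul hδlen v n k
    have h2 : ((k * n : ℕ) : ℤ) * lenIM X W₀ Rplus w ≤
        lenIM X W₀ Rplus (twistedPow X W₀ δ v (k * n)) + C := by
      have hb' := hb (k * n)
      rw [hwstr (k * n)] at hb'
      linarith
    have h2' : (k : ℤ) * ((n : ℤ) * lenIM X W₀ Rplus v) ≤
        lenIM X W₀ Rplus (twistedPow X W₀ δ v (k * n)) + C := by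
      have hcast : ((k * n : ℕ) : ℤ) * lenIM X W₀ Rplus w =
          (k : ℤ) * ((n : ℤ) * lenIM X W₀ Rplus v) := by
        rw [← hvw]; push_cast; ring
      rwa [hcast] at h2
    have h3 : (k : ℤ) * lenIM X W₀ Rplus (twistedPow X W₀ δ v n) ≤
        (k : ℤ) * ((n : ℤ) * lenIM X W₀ Rplus v - 1) :=
      mul_le_mul_of_nonneg_left hlt (by rw [hkcast]; linarith)
    have hexp : (k : ℤ) * ((n : ℤ) * lenIM X W₀ Rplus v - 1) =
        (k : ℤ) * ((n : ℤ) * lenIM X W₀ Rplus v) - (k : ℤ) := by ring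
    rw [hexp] at h3
    rw [hkcast] at h1 h2' h3
    linarith
  · rintro ⟨hv, hstr⟩
    exact ⟨hv, fun u hu => lower v hv hstr u hu⟩
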